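/- arXiv:2204.09938 — 2 statements merged into one kernel-verified Lean document; each statement's English description precedes it below -/
import Mathlib

section
/- Let X be a real random variable with continuous and strictly increasing cumulative distribution function F, let F̃ be a cumulative distribution function on ℝ, and let q ≥ 1. Then for every measurable map g : ℝ → ℝ such that g(X) has cumulative distribution function F̃, the transport cost satisfies E[|X − g(X)|^q] ≥ ∫₀¹ |F⁻¹(p) − F̃⁻¹(p)|^q dp. Combined with the equality for g = F̃⁻¹ ∘ F, this map is a minimizer of the Monge problem inf{E[|X − g(X)|^q] : g(X) ∼ F̃}. -/
open MeasureTheory ProbabilityTheory Set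

/-- Generalized inverse (quantile function) of a cumulative distribution function:
`G⁻¹(p) = inf {x : ℝ | G x ≥ p}`. -/
noncomputable def quantileFn (G : ℝ → ℝ) (p : ℝ) : ℝ :=
  sInf {x : ℝ | p ≤ G x}

open Filter intervalIntegral
open scoped ENNReal NNReal

section Quantile
variable (ν : Measure ℝ) [IsProbabilityMeasure ν]

omit [IsProbabilityMeasure ν] in
lemma bddBelow_quantile_set {p : ℝ} (hp : 0 < p) : BddBelow {x : ℝ | p ≤ cdf ν x} := by
  have h := (tendsto_cdf_atBot ν).eventually (eventually_lt_nhds hp)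
  rcases h.exists with ⟨x₀, hx₀⟩
  refine ⟨x₀, fun y hy => ?_⟩
  by_contra hlt
  push_neg at hlt
  exact absurd (le_trans hy (monotone_cdf ν hlt.le)) (not_le.2 hx₀)

omit [IsProbabilityMeasure ν] in
lemma nonempty_quantile_set {p : ℝ} (hp : p < 1) : {x : ℝ | p ≤ cdf ν x}.Nonempty := by
  have h := (tendsto_cdf_atTop ν).eventually (eventually_gt_nhds hp)
  rcases h.exists with ⟨x₀, hx₀⟩
  exact ⟨x₀, hx₀.le⟩

omit [IsProbabilityMeasure ν] in
lemma quantile_le {p x : ℝ} (hp : 0 < p) (h : p ≤ cdf ν x) : quantileFn (cdf ν) p ≤ x :=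
  csInf_le (bddBelow_quantile_set ν hp) h

omit [IsProbabilityMeasure ν] in
lemma le_cdf_of_quantile_le {p x : ℝ} (hp : 0 < p) (hp1 : p < 1)
    (h : quantileFn (cdf ν) p ≤ x) : p ≤ cdf ν x := by
  have key : ∀ z, x < z → p ≤ cdf ν z := by
    intro z hz
    have : sInf {x : ℝ | p ≤ cdf ν x} < z := lt_of_le_of_lt h hz
    rcases (csInf_lt_iff (bddBelow_quantile_set ν hp) (nonempty_quantile_set ν hp1)).1 this
      with ⟨y, hy, hyz⟩
    exact le_trans hy (monotone_cdf ν hyz.le)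
  have hrc : ContinuousWithinAt (cdf ν) (Ioi x) x :=
    ((cdf ν).right_continuous x).mono Ioi_subset_Ici_self
  have : Tendsto (cdf ν) (nhdsWithin x (Ioi x)) (nhds (cdf ν x)) := hrc
  refine ge_of_tendsto this ?_
  filter_upwards [self_mem_nhdsWithin] with z hz using key z hz

omit [IsProbabilityMeasure ν] in
lemma monotoneOn_quantile : MonotoneOn (quantileFn (cdf ν)) (Ioo (0:ℝ) 1) := by
  intro p hp p' hp' hpp'
  refine csInf_le_csInf (bddBelow_quantile_set ν hp.1) (nonempty_quantile_set ν hp'.2)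
    (fun x hx => le_trans hpp' hx)

end Quantile

section Rep
variable {q : ℝ}

lemma rep_one (a b : ℝ) :
    ENNReal.ofReal |a - b| =
      ∫⁻ s : ℝ, (if min a b ≤ s ∧ s < max a b then (1 : ℝ≥0∞) else 0) := by
  have h1 : ∀ s : ℝ, (if min a b ≤ s ∧ s < max a b then (1 : ℝ≥0∞) else 0)
      = (Ico (min a b) (max a b)).indicator (fun _ => (1 : ℝ≥0∞)) s := by
    intro s
    simp [Set.indicator_apply, mem_Ico]
  simp_rw [h1]
  rw [show (fun s => (Ico (min a b) (max a b)).indicator (fun _ => (1:ℝ≥0∞)) s)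
      = (Ico (min a b) (max a b)).indicator (1 : ℝ → ℝ≥0∞) from rfl,
    lintegral_indicator_one measurableSet_Ico, Real.volume_Ico, max_sub_min_eq_abs, abs_sub_comm]

lemma inner_int (hq : 1 < q) (s b : ℝ) :
    ∫⁻ t : ℝ, (if t < b ∧ s ≤ t then ENNReal.ofReal (q * (q-1) * (t-s) ^ (q-2)) else 0)
      = ENNReal.ofReal (q * max (b - s) 0 ^ (q-1)) := by
  by_cases hsb : s < b
  · have hset : ∀ t : ℝ, (if t < b ∧ s ≤ t then ENNReal.ofReal (q * (q-1) * (t-s) ^ (q-2)) else 0)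
        = (Ico s b).indicator (fun t => ENNReal.ofReal (q * (q-1) * (t-s) ^ (q-2))) t := by
      intro t; simp [Set.indicator_apply, mem_Ico, and_comm]
    simp_rw [hset]
    rw [lintegral_indicator measurableSet_Ico]
    have hint : IntegrableOn (fun t => q * (q-1) * (t-s) ^ (q-2)) (Ico s b) := by
      have h1 : IntervalIntegrable (fun x : ℝ => x ^ (q-2)) volume 0 (b - s) :=
        intervalIntegrable_rpow' (by linarith)
      have h2 : IntervalIntegrable (fun x : ℝ => (x - s) ^ (q-2)) volume s b := by
        have := h1.comp_sub_right s
        simpa using this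
      have h3 := (h2.const_mul (q * (q-1)))
      exact (intervalIntegrable_iff_integrableOn_Ico_of_le hsb.le).1 h3
    rw [← ofReal_integral_eq_lintegral_ofReal hint ?nn]
    case nn =>
      refine (ae_restrict_iff' measurableSet_Ico).2 (ae_of_all _ fun t ht => ?_)
      exact mul_nonneg (mul_nonneg (by linarith) (by linarith))
        (Real.rpow_nonneg (by linarith [ht.1]) _)
    have hIoo : ∫ t in Ico s b, q * (q-1) * (t-s) ^ (q-2) = ∫ t in s..b, q * (q-1) * (t-s) ^ (q-2) := by
      rw [integral_Ico_eq_integral_Ioo, intervalIntegral.integral_of_le hsb.le,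
        integral_Ioc_eq_integral_Ioo]
    rw [hIoo, intervalIntegral.integral_const_mul]
    have hcomp : ∫ t in s..b, (t-s) ^ (q-2) = ∫ u in (0:ℝ)..(b-s), u ^ (q-2) := by
      have := intervalIntegral.integral_comp_sub_right (a := s) (b := b) (fun u => u ^ (q-2)) s
      simpa using this
    rw [hcomp, integral_rpow (Or.inl (by linarith))]
    have hq1 : q - 2 + 1 = q - 1 := by ring
    rw [hq1, Real.zero_rpow (by linarith : q - 1 ≠ 0)]
    rw [max_eq_left (by linarith : (0:ℝ) ≤ b - s)]
    congr 1
    have hne : q - 1 ≠ 0 := by linarith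
    field_simp
    ring
  · push_neg at hsb
    have hset : ∀ t : ℝ, (if t < b ∧ s ≤ t then ENNReal.ofReal (q * (q-1) * (t-s) ^ (q-2)) else 0)
        = 0 := by
      intro t
      rw [if_neg]
      rintro ⟨h1, h2⟩
      exact absurd (lt_of_le_of_lt h2 h1) (not_lt.2 hsb)
    simp_rw [hset]
    rw [lintegral_zero, max_eq_right (by linarith : b - s ≤ (0:ℝ)),
      Real.zero_rpow (by linarith : q - 1 ≠ 0), mul_zero, ENNReal.ofReal_zero]

lemma outer_int (hq : 1 < q) (a b : ℝ) (hab : a ≤ b) :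
    ∫⁻ s : ℝ, (if a ≤ s then ENNReal.ofReal (q * max (b - s) 0 ^ (q-1)) else 0)
      = ENNReal.ofReal ((b - a) ^ q) := by
  have hset : ∀ s : ℝ, (if a ≤ s then ENNReal.ofReal (q * max (b - s) 0 ^ (q-1)) else 0)
      = (Ico a b).indicator (fun s => ENNReal.ofReal (q * (b - s) ^ (q-1))) s := by
    intro s
    rcases lt_or_ge s a with h | h
    · simp [Set.indicator_apply, mem_Ico, not_le.2 h, h.not_ge]
    rcases lt_or_ge s b with h2 | h2
    · rw [if_pos h, Set.indicator_of_mem (mem_Ico.2 ⟨h, h2⟩)]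
      rw [max_eq_left (by linarith : (0:ℝ) ≤ b - s)]
    · rw [if_pos h, Set.indicator_of_notMem (by simp [mem_Ico, not_lt.2 h2, h2])]
      rw [max_eq_right (by linarith : b - s ≤ (0:ℝ)),
        Real.zero_rpow (by linarith : q - 1 ≠ 0), mul_zero, ENNReal.ofReal_zero]
  simp_rw [hset]
  rw [lintegral_indicator measurableSet_Ico]
  have hcont : Continuous fun s : ℝ => q * (b - s) ^ (q-1) := by
    refine Continuous.mul continuous_const ?_
    exact (continuous_const.sub continuous_id).rpow_const fun x => Or.inr (by linarith)
  have hint : IntegrableOn (fun s => q * (b - s) ^ (q-1)) (Ico a b) :=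
    (intervalIntegrable_iff_integrableOn_Ico_of_le hab).1 (hcont.intervalIntegrable _ _)
  rw [← ofReal_integral_eq_lintegral_ofReal hint ?nn]
  case nn =>
    refine (ae_restrict_iff' measurableSet_Ico).2 (ae_of_all _ fun t ht => ?_)
    exact mul_nonneg (by linarith) (Real.rpow_nonneg (by linarith [ht.2]) _)
  have hIoo : ∫ s in Ico a b, q * (b - s) ^ (q-1) = ∫ s in a..b, q * (b - s) ^ (q-1) := by
    rw [integral_Ico_eq_integral_Ioo, intervalIntegral.integral_of_le hab,
      integral_Ioc_eq_integral_Ioo]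
  rw [hIoo, intervalIntegral.integral_const_mul]
  have hcomp : ∫ s in a..b, (b - s) ^ (q-1) = ∫ u in (0:ℝ)..(b-a), u ^ (q-1) := by
    have := intervalIntegral.integral_comp_sub_left (a := a) (b := b) (fun u => u ^ (q-1)) b
    simpa using this
  rw [hcomp, integral_rpow (Or.inl (by linarith))]
  have hq1 : q - 1 + 1 = q := by ring
  rw [hq1, Real.zero_rpow (by linarith : q ≠ 0)]
  congr 1
  field_simp
  ring

lemma measurable_rpow_const : Measurable fun x : ℝ => x ^ (q-2) := by
  refine measurable_of_continuousOn_compl_singleton 0 ?_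
  intro x hx
  exact (Real.continuousAt_rpow_const x (q-2) (Or.inl hx)).continuousWithinAt

lemma measurable_K :
    Measurable fun st : ℝ × ℝ =>
      (if st.1 ≤ st.2 then ENNReal.ofReal (q * (q-1) * (st.2 - st.1) ^ (q-2)) else 0) := by
  refine Measurable.ite (measurableSet_le measurable_fst measurable_snd) ?_ measurable_const
  refine Measurable.ennreal_ofReal ?_
  exact (measurable_rpow_const.comp (measurable_snd.sub measurable_fst)).const_mul _

lemma rep_pow (hq : 1 < q) (a b : ℝ) :
    ENNReal.ofReal (|a - b| ^ q) =
      ∫⁻ st : ℝ × ℝ, (if min a b ≤ st.1 ∧ st.2 < max a b then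
        (if st.1 ≤ st.2 then ENNReal.ofReal (q * (q-1) * (st.2 - st.1) ^ (q-2)) else 0)
        else 0) := by
  have hmeas : Measurable fun st : ℝ × ℝ => (if min a b ≤ st.1 ∧ st.2 < max a b then
      (if st.1 ≤ st.2 then ENNReal.ofReal (q * (q-1) * (st.2 - st.1) ^ (q-2)) else 0)
      else 0) := by
    refine Measurable.ite ?_ measurable_K measurable_const
    exact ((measurableSet_le measurable_const measurable_fst).inter
      (measurableSet_lt measurable_snd measurable_const))
  rw [MeasureTheory.Measure.volume_eq_prod ℝ ℝ, lintegral_prod _ hmeas.aemeasurable]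
  have hpt : ∀ s t : ℝ, (if min a b ≤ (s, t).1 ∧ (s, t).2 < max a b then
      (if (s, t).1 ≤ (s, t).2 then ENNReal.ofReal (q * (q-1) * ((s, t).2 - (s, t).1) ^ (q-2)) else 0)
      else 0)
      = (if min a b ≤ s then
          (if t < max a b ∧ s ≤ t then ENNReal.ofReal (q * (q-1) * (t - s) ^ (q-2)) else 0)
        else 0) := by
    intro s t
    by_cases h1 : min a b ≤ s <;> by_cases h2 : t < max a b <;> by_cases h3 : s ≤ t <;>
      simp [h1, h2, h3]
  simp_rw [hpt]
  have hinner : ∀ s : ℝ, ∫⁻ t : ℝ, (if min a b ≤ s then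
      (if t < max a b ∧ s ≤ t then ENNReal.ofReal (q * (q-1) * (t - s) ^ (q-2)) else 0)
      else 0)
      = (if min a b ≤ s then ENNReal.ofReal (q * max (max a b - s) 0 ^ (q-1)) else 0) := by
    intro s
    by_cases h1 : min a b ≤ s
    · simp only [h1, if_true]
      exact inner_int hq s (max a b)
    · simp [h1]
  simp_rw [hinner]
  rw [outer_int hq (min a b) (max a b) min_le_max, max_sub_min_eq_abs, abs_sub_comm]

end Rep

/-- **Lower bound for the Monge problem in one dimension.**
If `X` has continuous, strictly increasing cdf `F`, `F̃` is the cdf of a probability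
distribution `ν` on `ℝ`, and `q ≥ 1`, then every measurable `g : ℝ → ℝ` such that `g(X)`
has cdf `F̃` satisfies `E[|X − g(X)|^q] ≥ ∫₀¹ |F⁻¹(p) − F̃⁻¹(p)|^q dp`.
(Together with the equality attained by `g = F̃⁻¹ ∘ F`, this shows that map minimizes
the Monge problem.) -/
theorem transport_cost_ge_quantile_dist
    {Ω : Type*} [MeasurableSpace Ω] (μ : Measure Ω) [IsProbabilityMeasure μ]
    (X : Ω → ℝ) (hX : Measurable X)
    (hcont : Continuous (cdf (μ.map X)))
    (hmono : StrictMono (cdf (μ.map X)))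
    (ν : Measure ℝ) [IsProbabilityMeasure ν]
    (q : ℝ) (hq : 1 ≤ q)
    (g : ℝ → ℝ) (hg : Measurable g)
    (hgX : ∀ x : ℝ, cdf (μ.map fun ω => g (X ω)) x = cdf ν x) :
    ∫⁻ ω, ENNReal.ofReal (|X ω - g (X ω)| ^ q) ∂μ ≥
      ∫⁻ p in Ioo (0 : ℝ) 1,
        ENNReal.ofReal (|quantileFn (cdf (μ.map X)) p - quantileFn (cdf ν) p| ^ q) := by
  set Y : Ω → ℝ := fun ω => g (X ω) with hYdef
  have hY : Measurable Y := hg.comp hX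
  haveI hPX : IsProbabilityMeasure (μ.map X) := Measure.isProbabilityMeasure_map hX.aemeasurable
  haveI hPY : IsProbabilityMeasure (μ.map Y) := Measure.isProbabilityMeasure_map hY.aemeasurable
  set qF : ℝ → ℝ := quantileFn (cdf (μ.map X)) with hqFdef
  set qG : ℝ → ℝ := quantileFn (cdf ν) with hqGdef
  -- cdf facts
  have hFX : ∀ s : ℝ, μ {ω | X ω ≤ s} = ENNReal.ofReal (cdf (μ.map X) s) := by
    intro s
    rw [ofReal_cdf, Measure.map_apply hX measurableSet_Iic]
    rfl
  have hGY : ∀ t : ℝ, μ {ω | Y ω ≤ t} = ENNReal.ofReal (cdf ν t) := by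
    intro t
    rw [← hgX t, ofReal_cdf, Measure.map_apply hY measurableSet_Iic]
    rfl
  -- measurability of events
  have hEmeas : ∀ s t : ℝ, MeasurableSet {ω | X ω ≤ s ∧ t < Y ω} := fun s t =>
    (hX measurableSet_Iic).inter (hY measurableSet_Ioi)
  have hEmeas' : ∀ s t : ℝ, MeasurableSet {ω | Y ω ≤ s ∧ t < X ω} := fun s t =>
    (hY measurableSet_Iic).inter (hX measurableSet_Ioi)
  -- the core one-dimensional inequality
  have core : ∀ s t : ℝ, s ≤ t →
      volume.restrict (Ioo (0:ℝ) 1)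
        {p | min (qF p) (qG p) ≤ s ∧ t < max (qF p) (qG p)}
      ≤ μ {ω | min (X ω) (Y ω) ≤ s ∧ t < max (X ω) (Y ω)} := by
    intro s t hst
    have hsub : {p | min (qF p) (qG p) ≤ s ∧ t < max (qF p) (qG p)}
        ⊆ {p | qF p ≤ s ∧ t < qG p} ∪ {p | qG p ≤ s ∧ t < qF p} := by
      rintro p ⟨h1, h2⟩
      rcases lt_max_iff.1 h2 with h2' | h2'
      · right
        refine ⟨?_, h2'⟩
        rcases min_le_iff.1 h1 with h1' | h1'
        · exact absurd (lt_of_le_of_lt (h1'.trans hst) h2') (lt_irrefl _)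
        · exact h1'
      · left
        refine ⟨?_, h2'⟩
        rcases min_le_iff.1 h1 with h1' | h1'
        · exact h1'
        · exact absurd (lt_of_le_of_lt (h1'.trans hst) h2') (lt_irrefl _)
    have claim1 : volume.restrict (Ioo (0:ℝ) 1) {p | qF p ≤ s ∧ t < qG p}
        ≤ μ {ω | X ω ≤ s ∧ t < Y ω} := by
      rw [Measure.restrict_apply' measurableSet_Ioo]
      have hsub2 : {p | qF p ≤ s ∧ t < qG p} ∩ Ioo (0:ℝ) 1 ⊆ Ioc (cdf ν t) (cdf (μ.map X) s) := by
        rintro p ⟨⟨h1, h2⟩, hp0, hp1⟩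
        constructor
        · by_contra hle
          push_neg at hle
          exact absurd (quantile_le ν hp0 hle) (not_le.2 h2)
        · exact le_cdf_of_quantile_le (μ.map X) hp0 hp1 h1
      refine le_trans (measure_mono hsub2) ?_
      rw [Real.volume_Ioc]
      have heq : {ω | X ω ≤ s ∧ t < Y ω} = {ω | X ω ≤ s} \ {ω | Y ω ≤ t} := by
        ext ω; simp [not_le]
      rw [heq, ENNReal.ofReal_sub _ (cdf_nonneg ν t), ← hFX s, ← hGY t]
      exact le_measure_diff
    have claim2 : volume.restrict (Ioo (0:ℝ) 1) {p | qG p ≤ s ∧ t < qF p}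
        ≤ μ {ω | Y ω ≤ s ∧ t < X ω} := by
      rw [Measure.restrict_apply' measurableSet_Ioo]
      have hsub2 : {p | qG p ≤ s ∧ t < qF p} ∩ Ioo (0:ℝ) 1
          ⊆ Ioc (cdf (μ.map X) t) (cdf ν s) := by
        rintro p ⟨⟨h1, h2⟩, hp0, hp1⟩
        constructor
        · by_contra hle
          push_neg at hle
          exact absurd (quantile_le (μ.map X) hp0 hle) (not_le.2 h2)
        · exact le_cdf_of_quantile_le ν hp0 hp1 h1
      refine le_trans (measure_mono hsub2) ?_
      rw [Real.volume_Ioc]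
      have heq : {ω | Y ω ≤ s ∧ t < X ω} = {ω | Y ω ≤ s} \ {ω | X ω ≤ t} := by
        ext ω; simp [not_le]
      rw [heq, ENNReal.ofReal_sub _ (cdf_nonneg (μ.map X) t), ← hGY s, ← hFX t]
      exact le_measure_diff
    have hdisj : Disjoint {ω | X ω ≤ s ∧ t < Y ω} {ω | Y ω ≤ s ∧ t < X ω} := by
      rw [disjoint_left]
      rintro ω ⟨h1, h2⟩ ⟨h3, h4⟩
      exact absurd (lt_of_le_of_lt (h1.trans hst) h4) (lt_irrefl _)
    have hunion : μ {ω | X ω ≤ s ∧ t < Y ω} + μ {ω | Y ω ≤ s ∧ t < X ω}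
        ≤ μ {ω | min (X ω) (Y ω) ≤ s ∧ t < max (X ω) (Y ω)} := by
      rw [← measure_union hdisj (hEmeas' s t)]
      refine measure_mono ?_
      rintro ω (⟨h1, h2⟩ | ⟨h1, h2⟩)
      · exact ⟨min_le_iff.2 (Or.inl h1), lt_max_iff.2 (Or.inr h2)⟩
      · exact ⟨min_le_iff.2 (Or.inr h1), lt_max_iff.2 (Or.inl h2)⟩
    exact le_trans (measure_mono hsub) (le_trans (measure_union_le _ _)
      (le_trans (add_le_add claim1 claim2) hunion))
  -- a.e.-measurability of the quantile side
  have hmF : AEMeasurable qF (volume.restrict (Ioo (0:ℝ) 1)) :=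
    aemeasurable_restrict_of_monotoneOn measurableSet_Ioo (monotoneOn_quantile (μ.map X))
  have hmG : AEMeasurable qG (volume.restrict (Ioo (0:ℝ) 1)) :=
    aemeasurable_restrict_of_monotoneOn measurableSet_Ioo (monotoneOn_quantile ν)
  have hmmin : AEMeasurable (fun p => min (qF p) (qG p)) (volume.restrict (Ioo (0:ℝ) 1)) :=
    hmF.min hmG
  have hmmax : AEMeasurable (fun p => max (qF p) (qG p)) (volume.restrict (Ioo (0:ℝ) 1)) :=
    hmF.max hmG
  rw [ge_iff_le]
  rcases eq_or_lt_of_le hq with hq1 | hq1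
  · -- case q = 1
    subst hq1
    simp only [Real.rpow_one]
    set f1 : Ω → ℝ → ℝ≥0∞ := fun ω s =>
      if min (X ω) (Y ω) ≤ s ∧ s < max (X ω) (Y ω) then 1 else 0 with hf1def
    set h1 : ℝ → ℝ → ℝ≥0∞ := fun p s =>
      if min (qF p) (qG p) ≤ s ∧ s < max (qF p) (qG p) then 1 else 0 with hh1def
    have hf1meas : AEMeasurable (Function.uncurry f1) (μ.prod volume) := by
      have : Measurable fun z : Ω × ℝ =>
          (if min (X z.1) (Y z.1) ≤ z.2 ∧ z.2 < max (X z.1) (Y z.1) then (1:ℝ≥0∞) else 0) := by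
        refine Measurable.ite ?_ measurable_const measurable_const
        exact (measurableSet_le ((hX.comp measurable_fst).min (hY.comp measurable_fst))
            measurable_snd).inter
          (measurableSet_lt measurable_snd ((hX.comp measurable_fst).max (hY.comp measurable_fst)))
      exact this.aemeasurable
    have hh1meas : AEMeasurable (Function.uncurry h1)
        ((volume.restrict (Ioo (0:ℝ) 1)).prod volume) := by
      have hΨ : Measurable fun w : (ℝ × ℝ) × ℝ =>
          (if w.1.1 ≤ w.2 ∧ w.2 < w.1.2 then (1:ℝ≥0∞) else 0) := by
        refine Measurable.ite ?_ measurable_const measurable_const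
        exact (measurableSet_le (measurable_fst.fst) measurable_snd).inter
          (measurableSet_lt measurable_snd (measurable_fst.snd))
      have hΦ : AEMeasurable (fun z : ℝ × ℝ =>
          ((min (qF z.1) (qG z.1), max (qF z.1) (qG z.1)), z.2))
          ((volume.restrict (Ioo (0:ℝ) 1)).prod volume) := by
        refine AEMeasurable.prodMk (AEMeasurable.prodMk ?_ ?_) measurable_snd.aemeasurable
        · exact hmmin.comp_quasiMeasurePreserving Measure.quasiMeasurePreserving_fst
        · exact hmmax.comp_quasiMeasurePreserving Measure.quasiMeasurePreserving_fst
      exact hΨ.comp_aemeasurable hΦ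
    have claim : ∀ s : ℝ, ∫⁻ p in Ioo (0:ℝ) 1, h1 p s ≤ ∫⁻ ω, f1 ω s ∂μ := by
      intro s
      have hNM : NullMeasurableSet {p | min (qF p) (qG p) ≤ s ∧ s < max (qF p) (qG p)}
          (volume.restrict (Ioo (0:ℝ) 1)) := by
        have h1' : NullMeasurableSet ((fun p => min (qF p) (qG p)) ⁻¹' (Iic s))
            (volume.restrict (Ioo (0:ℝ) 1)) := hmmin.nullMeasurable measurableSet_Iic
        have h2' : NullMeasurableSet ((fun p => max (qF p) (qG p)) ⁻¹' (Ioi s))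
            (volume.restrict (Ioo (0:ℝ) 1)) := hmmax.nullMeasurable measurableSet_Ioi
        exact h1'.inter h2'
      have e1 : ∫⁻ p in Ioo (0:ℝ) 1, h1 p s
          = 1 * volume.restrict (Ioo (0:ℝ) 1)
              {p | min (qF p) (qG p) ≤ s ∧ s < max (qF p) (qG p)} := by
        rw [← lintegral_indicator_const₀ hNM 1]
        refine lintegral_congr fun p => ?_
        simp [hh1def, Set.indicator_apply]
      have e2 : ∫⁻ ω, f1 ω s ∂μ
          = 1 * μ {ω | min (X ω) (Y ω) ≤ s ∧ s < max (X ω) (Y ω)} := by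
        have hms : MeasurableSet {ω | min (X ω) (Y ω) ≤ s ∧ s < max (X ω) (Y ω)} :=
          (measurableSet_le (hX.min hY) measurable_const).inter
            (measurableSet_lt measurable_const (hX.max hY))
        rw [← lintegral_indicator_const hms 1]
        refine lintegral_congr fun ω => ?_
        simp [hf1def, Set.indicator_apply]
      rw [e1, e2]
      exact mul_le_mul_right (core s s le_rfl) 1
    calc ∫⁻ p in Ioo (0:ℝ) 1, ENNReal.ofReal |qF p - qG p|
        = ∫⁻ p in Ioo (0:ℝ) 1, ∫⁻ s, h1 p s :=
          lintegral_congr fun p => rep_one (qF p) (qG p)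
      _ = ∫⁻ s, ∫⁻ p in Ioo (0:ℝ) 1, h1 p s := lintegral_lintegral_swap hh1meas
      _ ≤ ∫⁻ s, ∫⁻ ω, f1 ω s ∂μ := lintegral_mono claim
      _ = ∫⁻ ω, (∫⁻ s, f1 ω s) ∂μ := (lintegral_lintegral_swap hf1meas).symm
      _ = ∫⁻ ω, ENNReal.ofReal |X ω - g (X ω)| ∂μ :=
          lintegral_congr fun ω => (rep_one (X ω) (Y ω)).symm
  · -- case 1 < q
    set K : ℝ × ℝ → ℝ≥0∞ := fun st =>
      if st.1 ≤ st.2 then ENNReal.ofReal (q * (q-1) * (st.2 - st.1) ^ (q-2)) else 0 with hKdef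
    set f2 : Ω → ℝ × ℝ → ℝ≥0∞ := fun ω st =>
      if min (X ω) (Y ω) ≤ st.1 ∧ st.2 < max (X ω) (Y ω) then K st else 0 with hf2def
    set h2 : ℝ → ℝ × ℝ → ℝ≥0∞ := fun p st =>
      if min (qF p) (qG p) ≤ st.1 ∧ st.2 < max (qF p) (qG p) then K st else 0 with hh2def
    have hf2meas : AEMeasurable (Function.uncurry f2) (μ.prod (volume : Measure (ℝ × ℝ))) := by
      have : Measurable fun z : Ω × (ℝ × ℝ) =>
          (if min (X z.1) (Y z.1) ≤ z.2.1 ∧ z.2.2 < max (X z.1) (Y z.1) then K z.2 else 0) := by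
        refine Measurable.ite ?_ (measurable_K.comp measurable_snd) measurable_const
        exact (measurableSet_le ((hX.comp measurable_fst).min (hY.comp measurable_fst))
            (measurable_snd.fst)).inter
          (measurableSet_lt (measurable_snd.snd)
            ((hX.comp measurable_fst).max (hY.comp measurable_fst)))
      exact this.aemeasurable
    have hh2meas : AEMeasurable (Function.uncurry h2)
        ((volume.restrict (Ioo (0:ℝ) 1)).prod (volume : Measure (ℝ × ℝ))) := by
      have hΨ : Measurable fun w : (ℝ × ℝ) × (ℝ × ℝ) =>
          (if w.1.1 ≤ w.2.1 ∧ w.2.2 < w.1.2 then K w.2 else 0) := by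
        refine Measurable.ite ?_ (measurable_K.comp measurable_snd) measurable_const
        exact (measurableSet_le (measurable_fst.fst) (measurable_snd.fst)).inter
          (measurableSet_lt (measurable_snd.snd) (measurable_fst.snd))
      have hΦ : AEMeasurable (fun z : ℝ × (ℝ × ℝ) =>
          ((min (qF z.1) (qG z.1), max (qF z.1) (qG z.1)), z.2))
          ((volume.restrict (Ioo (0:ℝ) 1)).prod (volume : Measure (ℝ × ℝ))) := by
        refine AEMeasurable.prodMk (AEMeasurable.prodMk ?_ ?_) measurable_snd.aemeasurable
        · exact hmmin.comp_quasiMeasurePreserving Measure.quasiMeasurePreserving_fst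
        · exact hmmax.comp_quasiMeasurePreserving Measure.quasiMeasurePreserving_fst
      exact hΨ.comp_aemeasurable hΦ
    have claim : ∀ st : ℝ × ℝ, ∫⁻ p in Ioo (0:ℝ) 1, h2 p st ≤ ∫⁻ ω, f2 ω st ∂μ := by
      intro st
      have hNM : NullMeasurableSet {p | min (qF p) (qG p) ≤ st.1 ∧ st.2 < max (qF p) (qG p)}
          (volume.restrict (Ioo (0:ℝ) 1)) := by
        have h1' : NullMeasurableSet ((fun p => min (qF p) (qG p)) ⁻¹' (Iic st.1))
            (volume.restrict (Ioo (0:ℝ) 1)) := hmmin.nullMeasurable measurableSet_Iic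
        have h2' : NullMeasurableSet ((fun p => max (qF p) (qG p)) ⁻¹' (Ioi st.2))
            (volume.restrict (Ioo (0:ℝ) 1)) := hmmax.nullMeasurable measurableSet_Ioi
        exact h1'.inter h2'
      have e1 : ∫⁻ p in Ioo (0:ℝ) 1, h2 p st
          = K st * volume.restrict (Ioo (0:ℝ) 1)
              {p | min (qF p) (qG p) ≤ st.1 ∧ st.2 < max (qF p) (qG p)} := by
        rw [← lintegral_indicator_const₀ hNM (K st)]
        refine lintegral_congr fun p => ?_
        simp [hh2def, Set.indicator_apply]
      have e2 : ∫⁻ ω, f2 ω st ∂μ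
          = K st * μ {ω | min (X ω) (Y ω) ≤ st.1 ∧ st.2 < max (X ω) (Y ω)} := by
        have hms : MeasurableSet {ω | min (X ω) (Y ω) ≤ st.1 ∧ st.2 < max (X ω) (Y ω)} :=
          (measurableSet_le (hX.min hY) measurable_const).inter
            (measurableSet_lt measurable_const (hX.max hY))
        rw [← lintegral_indicator_const hms (K st)]
        refine lintegral_congr fun ω => ?_
        simp [hf2def, Set.indicator_apply]
      rw [e1, e2]
      by_cases hst : st.1 ≤ st.2
      · exact mul_le_mul_right (core st.1 st.2 hst) (K st)
      · have : K st = 0 := by rw [hKdef]; exact if_neg hst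
        rw [this, zero_mul, zero_mul]
    calc ∫⁻ p in Ioo (0:ℝ) 1, ENNReal.ofReal (|qF p - qG p| ^ q)
        = ∫⁻ p in Ioo (0:ℝ) 1, ∫⁻ st : ℝ × ℝ, h2 p st :=
          lintegral_congr fun p => rep_pow hq1 (qF p) (qG p)
      _ = ∫⁻ st : ℝ × ℝ, ∫⁻ p in Ioo (0:ℝ) 1, h2 p st := lintegral_lintegral_swap hh2meas
      _ ≤ ∫⁻ st : ℝ × ℝ, ∫⁻ ω, f2 ω st ∂μ := lintegral_mono claim
      _ = ∫⁻ ω, (∫⁻ st : ℝ × ℝ, f2 ω st) ∂μ := (lintegral_lintegral_swap hf2meas).symm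
      _ = ∫⁻ ω, ENNReal.ofReal (|X ω - g (X ω)| ^ q) ∂μ :=
          lintegral_congr fun ω => (rep_pow hq1 (X ω) (Y ω)).symm
end

section
/- Let Z and X be real random variables on a probability space (Ω, μ), let ρ be the law of the pair (Z, X), and let F_{X|z} denote the conditional cumulative distribution function of X given Z = z (the conditional cdf from the disintegration of ρ). Suppose that for ρ-almost every z, the function x ↦ F_{X|z}(x) is continuous. Then the random variable U(ω) = F_{X|Z(ω)}(X(ω)) is uniformly distributed on [0,1] and is independent of Z. -/
open MeasureTheory ProbabilityTheory Set Filter Topology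

/-- Probability integral transform for a continuous Stieltjes cdf: the pushforward of the
Stieltjes measure of `f` under `f` itself is the uniform distribution on `[0,1]`. -/
lemma stieltjes_pit (f : StieltjesFunction ℝ) (h0 : Tendsto f atBot (𝓝 0))
    (h1 : Tendsto f atTop (𝓝 1)) (hc : Continuous f) :
    f.measure.map f = volume.restrict (Icc (0 : ℝ) 1) := by
  haveI := f.isProbabilityMeasure h0 h1
  have hfm : Measurable f := hc.measurable
  have hnonneg : ∀ x, 0 ≤ f x := fun x =>
    le_of_tendsto h0 (eventually_atBot.2 ⟨x, fun y hy => f.mono hy⟩)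
  have hle1 : ∀ x, f x ≤ 1 := fun x =>
    ge_of_tendsto h1 (eventually_atTop.2 ⟨x, fun y hy => f.mono hy⟩)
  refine Measure.ext_of_Iic _ _ fun t => ?_
  rw [Measure.map_apply hfm measurableSet_Iic, Measure.restrict_apply measurableSet_Iic]
  have hIcc : Iic t ∩ Icc (0:ℝ) 1 = Icc 0 (min t 1) := by
    ext x
    simp only [mem_inter_iff, mem_Iic, mem_Icc, le_min_iff]
    tauto
  rw [hIcc, Real.volume_Icc]
  rcases lt_or_ge t 0 with ht | ht
  · have h1' : f ⁻¹' Iic t = ∅ := by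
      ext x
      simp only [mem_preimage, mem_Iic, mem_empty_iff_false, iff_false, not_le]
      exact lt_of_lt_of_le ht (hnonneg x)
    rw [h1', min_eq_left (by linarith : t ≤ 1), sub_zero, ENNReal.ofReal_of_nonpos ht.le,
      measure_empty]
  · rcases le_or_gt 1 t with ht1 | ht1
    · have h1' : f ⁻¹' Iic t = univ := by
        ext x
        simp only [mem_preimage, mem_Iic, mem_univ, iff_true]
        exact le_trans (hle1 x) ht1
      rw [h1', min_eq_right ht1, sub_zero, ENNReal.ofReal_one]
      exact measure_univ
    · rw [min_eq_left ht1.le, sub_zero]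
      by_cases hS : (f ⁻¹' Iic t).Nonempty
      · -- the set `{x | f x ≤ t}` is a nonempty closed lower set, hence `Iic a`
        have hSc : IsClosed (f ⁻¹' Iic t) := isClosed_Iic.preimage hc
        obtain ⟨b, hb⟩ : ∃ b, t < f b := (h1.eventually_const_lt ht1).exists
        have hbdd : BddAbove (f ⁻¹' Iic t) := by
          refine ⟨b, fun x hx => ?_⟩
          by_contra hxb
          push_neg at hxb
          have h1 : f b ≤ f x := f.mono hxb.le
          have h2 : f x ≤ t := hx
          linarith
        set a := sSup (f ⁻¹' Iic t) with ha_def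
        have ha : a ∈ f ⁻¹' Iic t := hSc.csSup_mem hS hbdd
        have hSa : f ⁻¹' Iic t = Iic a := by
          ext x
          constructor
          · exact fun hx => le_csSup hbdd hx
          · intro hx
            exact le_trans (f.mono hx) ha
        have hfa : f a = t := by
          refine le_antisymm ha ?_
          by_contra h
          push_neg at h
          have hev : ∀ᶠ x in 𝓝[>] a, f x < t :=
            nhdsWithin_le_nhds ((hc.tendsto a).eventually_lt_const h)
          obtain ⟨x, hfx, hxa⟩ := (hev.and eventually_mem_nhdsWithin).exists
          exact absurd (le_csSup hbdd (le_of_lt hfx : f x ≤ t)) (not_le.2 hxa)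
        rw [hSa, f.measure_Iic h0, sub_zero, hfa]
      · -- empty case: necessarily `t = 0`
        have ht0 : t = 0 := by
          refine le_antisymm ?_ ht
          by_contra h
          push_neg at h
          obtain ⟨x, hx⟩ := (h0.eventually_lt_const h).exists
          exact hS ⟨x, hx.le⟩
        rw [not_nonempty_iff_eq_empty.mp hS, ht0]
        simp

/-- Joint measurability of the conditional cdf `(a, x) ↦ condCDF ρ a x`. -/
lemma measurable_condCDF_prod {α : Type*} [MeasurableSpace α] (ρ : Measure (α × ℝ)) :
    Measurable fun p : α × ℝ => condCDF ρ p.1 p.2 := by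
  have h1 : Measurable fun p : α × ℝ => (condCDF ρ p.1).measure (Iic p.2) := by
    let κ : ProbabilityTheory.Kernel (α × ℝ) ℝ :=
      ⟨fun p => (condCDF ρ p.1).measure,
        (measurable_measure_condCDF ρ).comp measurable_fst⟩
    haveI : ProbabilityTheory.IsMarkovKernel κ :=
      ⟨fun p => ProbabilityTheory.instIsProbabilityMeasureCondCDF ρ p.1⟩
    have hs : MeasurableSet {q : (α × ℝ) × ℝ | q.2 ≤ q.1.2} :=
      measurableSet_le measurable_snd measurable_fst.snd
    have h := ProbabilityTheory.Kernel.measurable_kernel_prodMk_left (κ := κ) hs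
    have heq : (fun p : α × ℝ => κ p (Prod.mk p ⁻¹' {q : (α × ℝ) × ℝ | q.2 ≤ q.1.2}))
        = fun p : α × ℝ => (condCDF ρ p.1).measure (Iic p.2) := rfl
    rwa [heq] at h
  have h2 : (fun p : α × ℝ => condCDF ρ p.1 p.2)
      = fun p : α × ℝ => ((condCDF ρ p.1).measure (Iic p.2)).toReal := by
    ext p
    rw [measure_condCDF_Iic, ENNReal.toReal_ofReal (condCDF_nonneg ρ p.1 p.2)]
  rw [h2]
  exact h1.ennreal_toReal

/-- Disintegration of `ρ` via the measures associated to the conditional cdf. -/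
lemma lintegral_condCDF_measure_mem {α : Type*} [MeasurableSpace α] (ρ : Measure (α × ℝ))
    [IsFiniteMeasure ρ] {s : Set (α × ℝ)} (hs : MeasurableSet s) :
    ∫⁻ a, (condCDF ρ a).measure {x | (a, x) ∈ s} ∂ρ.fst = ρ s := by
  have h := ProbabilityTheory.lintegral_toKernel_mem (isCondKernelCDF_condCDF ρ) () hs
  simp [ProbabilityTheory.IsCondKernelCDF.toKernel_apply] at h
  exact h

/-- **Conditional probability integral transform.**
Let `ρ` be the joint law of `(Z, X)` and `F_{X|z} = condCDF ρ z` the conditional cdf of `X`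
given `Z = z`. If for `ρ`-a.e. `z` the conditional cdf is continuous, then
`U(ω) = F_{X|Z(ω)}(X(ω))` is uniformly distributed on `[0,1]` and independent of `Z`. -/
theorem condCDF_apply_uniform_and_indep
    {Ω : Type*} [MeasurableSpace Ω] (μ : Measure Ω) [IsProbabilityMeasure μ]
    (Z X : Ω → ℝ) (hZ : Measurable Z) (hX : Measurable X)
    (ρ : Measure (ℝ × ℝ)) (hρ : ρ = μ.map fun ω => (Z ω, X ω))
    (hcont : ∀ᵐ z ∂ρ.fst, Continuous (condCDF ρ z)) :
    Measure.map (fun ω => condCDF ρ (Z ω) (X ω)) μ = volume.restrict (Icc (0 : ℝ) 1) ∧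
      IndepFun (fun ω => condCDF ρ (Z ω) (X ω)) Z μ := by
  have hZX : Measurable fun ω => (Z ω, X ω) := hZ.prodMk hX
  haveI hρprob : IsProbabilityMeasure ρ := by
    rw [hρ]; exact Measure.isProbabilityMeasure_map hZX.aemeasurable
  have hF : Measurable fun p : ℝ × ℝ => condCDF ρ p.1 p.2 := measurable_condCDF_prod ρ
  have hU : Measurable fun ω => condCDF ρ (Z ω) (X ω) := hF.comp hZX
  have hfst : ρ.fst = μ.map Z := by rw [hρ, Measure.fst_map_prodMk hX]
  haveI : IsProbabilityMeasure (μ.map Z) := Measure.isProbabilityMeasure_map hZ.aemeasurable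
  have hunif : ∀ᵐ a ∂ρ.fst,
      (condCDF ρ a).measure.map (condCDF ρ a) = volume.restrict (Icc (0:ℝ) 1) :=
    hcont.mono fun a ha =>
      stieltjes_pit _ (tendsto_condCDF_atBot ρ a) (tendsto_condCDF_atTop ρ a) ha
  -- the joint law of `(Z, U)` computed on rectangles
  have key : ∀ s A : Set ℝ, MeasurableSet s → MeasurableSet A →
      (μ.map fun ω => (Z ω, condCDF ρ (Z ω) (X ω))) (s ×ˢ A)
        = (μ.map Z) s * volume.restrict (Icc (0:ℝ) 1) A := by
    intro s A hs hA
    have hmeas : Measurable fun ω => (Z ω, condCDF ρ (Z ω) (X ω)) := hZ.prodMk hU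
    set T : Set (ℝ × ℝ) := Prod.fst ⁻¹' s ∩ (fun p : ℝ × ℝ => condCDF ρ p.1 p.2) ⁻¹' A with hT_def
    have hT : MeasurableSet T := (hs.preimage measurable_fst).inter (hA.preimage hF)
    have hpre : (fun ω => (Z ω, condCDF ρ (Z ω) (X ω))) ⁻¹' (s ×ˢ A)
        = (fun ω => (Z ω, X ω)) ⁻¹' T := by
      ext ω
      simp [hT_def, Set.mem_prod]
    rw [Measure.map_apply hmeas (hs.prod hA), hpre, ← Measure.map_apply hZX hT, ← hρ,
      ← lintegral_condCDF_measure_mem ρ hT]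
    have hslice : (fun a => (condCDF ρ a).measure {x | (a, x) ∈ T})
        = s.indicator fun a => (condCDF ρ a).measure (condCDF ρ a ⁻¹' A) := by
      ext a
      by_cases has : a ∈ s
      · rw [Set.indicator_of_mem has]
        congr 1
        ext x
        simp [hT_def, has]
      · rw [Set.indicator_of_notMem has]
        have : {x | (a, x) ∈ T} = ∅ := by
          ext x; simp [hT_def, has]
        rw [this, measure_empty]
    rw [hslice, lintegral_indicator hs]
    have hcongr : ∫⁻ a in s, (condCDF ρ a).measure (condCDF ρ a ⁻¹' A) ∂ρ.fst
        = ∫⁻ _ in s, volume.restrict (Icc (0:ℝ) 1) A ∂ρ.fst := by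
      refine lintegral_congr_ae (ae_restrict_of_ae ?_)
      filter_upwards [hunif] with a ha
      rw [← Measure.map_apply (condCDF ρ a).mono.measurable hA, ha]
    rw [hcongr, setLIntegral_const, hfst, mul_comm]
  have hmapprod : (μ.map fun ω => (Z ω, condCDF ρ (Z ω) (X ω)))
      = (μ.map Z).prod (volume.restrict (Icc (0:ℝ) 1)) :=
    (Measure.prod_eq fun s A hs hA => key s A hs hA).symm
  have huni : Measure.map (fun ω => condCDF ρ (Z ω) (X ω)) μ
      = volume.restrict (Icc (0 : ℝ) 1) := by
    have h1 : Measure.map (fun ω => condCDF ρ (Z ω) (X ω)) μ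
        = (μ.map fun ω => (Z ω, condCDF ρ (Z ω) (X ω))).map Prod.snd := by
      rw [Measure.map_map measurable_snd (hZ.prodMk hU)]
      rfl
    rw [h1, hmapprod]
    exact Measure.snd_prod
  refine ⟨huni, ?_⟩
  rw [ProbabilityTheory.indepFun_iff_map_prod_eq_prod_map_map hU.aemeasurable hZ.aemeasurable]
  have hswap : (μ.map fun ω => (condCDF ρ (Z ω) (X ω), Z ω))
      = (μ.map fun ω => (Z ω, condCDF ρ (Z ω) (X ω))).map Prod.swap := by
    rw [Measure.map_map measurable_swap (hZ.prodMk hU)]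
    rfl
  rw [hswap, hmapprod, Measure.prod_swap, huni]
end
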